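/- The substitution x_n = -u_n + 1/(3h²) transforms the recurrence x_{n-1} + x_{n+1} = (2x_n + h²t_n)/(1 - 3h²x_n) with t_n = nh into u_{n+1} + u_{n-1} = -((t_n/3) + 2/(9h⁴))/u_n + 4/(3h²), valid whenever u_n ≠ 0 and h ≠ 0. -/
import Mathlib

/-- The substitution `x_n = -u_n + 1/(3h²)` transforms the recurrence
`x_{n-1} + x_{n+1} = (2x_n + h²t_n)/(1 - 3h²x_n)` (with `t_n = nh`) into the
discrete Painlevé I form `u_{n+1} + u_{n-1} = -((t_n/3) + 2/(9h⁴))/u_n + 4/(3h²)`. -/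
theorem discrete_painleve_I_form (h : ℝ) (hh : h ≠ 0) (n : ℤ)
    (xm xn xp um un up tn : ℝ) (htn : tn = (n : ℝ) * h)
    (hxm : xm = -um + 1 / (3 * h^2))
    (hxn : xn = -un + 1 / (3 * h^2))
    (hxp : xp = -up + 1 / (3 * h^2))
    (hun : un ≠ 0)
    (hrec : xm + xp = (2 * xn + h^2 * tn) / (1 - 3 * h^2 * xn)) :
    up + um = -((tn / 3) + 2 / (9 * h^4)) / un + 4 / (3 * h^2) := by
  subst hxm hxn hxp
  have h1 : 1 - 3 * h^2 * (-un + 1 / (3 * h^2)) = 3 * h^2 * un := by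
    field_simp; ring
  rw [h1] at hrec
  have h2 : 3 * h^2 * un ≠ 0 := by positivity
  field_simp at hrec ⊢
  nlinarith [hrec, sq_nonneg h, sq_nonneg un]
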